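/- Let G be a connected finite simple graph of order n ≥ 3, and suppose G contains k (0,j)-disjoint spanning trees T_1, …, T_k with k ≥ 2. Then |E(G)| + j ≥ k·(n − 1). -/
import Mathlib


open SimpleGraph

variable {V : Type*}

/-- `T` is a spanning tree of `G`: a subgraph on all of `V` that is connected and acyclic. -/
def IsSpanningTree (G T : SimpleGraph V) : Prop :=
  T ≤ G ∧ T.Connected ∧ T.IsAcyclic

/-- The set of inner vertices of `T` (degree at least 2). -/
def innerSet (T : SimpleGraph V) : Set V :=
  {v | 2 ≤ (T.neighborSet v).ncard}

/-- Vertices that are inner vertices of at least two trees of the family. -/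
def innerMulti {k : ℕ} (T : Fin k → SimpleGraph V) : Set V :=
  {v | ∃ i j : Fin k, i ≠ j ∧ v ∈ innerSet (T i) ∧ v ∈ innerSet (T j)}

/-- Edges that belong to at least two trees of the family. -/
def edgeMulti {k : ℕ} (T : Fin k → SimpleGraph V) : Set (Sym2 V) :=
  {e | ∃ i j : Fin k, i ≠ j ∧ e ∈ (T i).edgeSet ∧ e ∈ (T j).edgeSet}

/-- A connected dominating set. -/
def IsConnDomSet (G : SimpleGraph V) (D : Set V) : Prop :=
  (G.induce D).Connected ∧ ∀ v ∉ D, ∃ w ∈ D, G.Adj v w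

/-- A predicate closed under adjacency propagates along walks. -/
lemma prop_of_walk {T : SimpleGraph V} {P : V → Prop}
    (hP : ∀ x y, P x → T.Adj x y → P y) :
    ∀ {x y : V}, (T.Walk x y) → P x → P y := by
  intro x y p
  induction p with
  | nil => exact id
  | cons h q ih => exact fun hx => ih (hP _ _ hx h)

/-- In a connected graph on at least 3 vertices, every edge has an endpoint
of degree at least 2. -/
lemma inner_of_adj [Fintype V] {T : SimpleGraph V} (hc : T.Connected)
    (hV : 3 ≤ Fintype.card V) {u v : V} (h : T.Adj u v) :
    2 ≤ (T.neighborSet u).ncard ∨ 2 ≤ (T.neighborSet v).ncard := by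
  classical
  by_contra hcon
  push_neg at hcon
  obtain ⟨h1, h2⟩ := hcon
  have hu : T.neighborSet u = {v} := by
    apply Set.eq_singleton_iff_unique_mem.2
    refine ⟨h, fun w hw => ?_⟩
    exact (Set.ncard_le_one_iff (Set.toFinite _)).1 (Nat.lt_succ_iff.1 h1) hw h
  have hv : T.neighborSet v = {u} := by
    apply Set.eq_singleton_iff_unique_mem.2
    refine ⟨h.symm, fun w hw => ?_⟩
    exact (Set.ncard_le_one_iff (Set.toFinite _)).1 (Nat.lt_succ_iff.1 h2) hw h.symm
  -- find a third vertex
  have : ∃ w : V, w ≠ u ∧ w ≠ v := by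
    by_contra hcon2
    push_neg at hcon2
    have hsub : (Finset.univ : Finset V) ⊆ {u, v} := by
      intro w _
      rcases eq_or_ne w u with rfl | hwu
      · simp
      · simp [hcon2 w hwu]
    have h1' := Finset.card_le_card hsub
    have h2' : ({u, v} : Finset V).card ≤ 2 := Finset.card_insert_le _ _ |>.trans (by simp)
    have h3' : (Finset.univ : Finset V).card = Fintype.card V := Finset.card_univ
    omega
  obtain ⟨w, hwu, hwv⟩ := this
  have hP : ∀ x y, (x = u ∨ x = v) → T.Adj x y → (y = u ∨ y = v) := by
    rintro x y (rfl | rfl) hxy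
    · right
      have : y ∈ T.neighborSet x := hxy
      rw [hu] at this; exact this
    · left
      have : y ∈ T.neighborSet x := hxy
      rw [hv] at this; exact this
  obtain ⟨p⟩ := hc u w
  rcases prop_of_walk hP p (Or.inl rfl) with rfl | rfl
  · exact hwu rfl
  · exact hwv rfl

/-- A graph containing `k` (0,j)-disjoint spanning trees has at least
`k(n-1) - j` edges. -/
theorem edge_lower_bound_zero_j [Fintype V] (G : SimpleGraph V) (hG : G.Connected)
    (hV : 3 ≤ Fintype.card V)
    (k j : ℕ) (hk : 2 ≤ k) (T : Fin k → SimpleGraph V)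
    (hT : ∀ m, IsSpanningTree G (T m))
    (hI : innerMulti T = ∅) (hE : (edgeMulti T).ncard ≤ j) :
    k * (Fintype.card V - 1) ≤ G.edgeSet.ncard + j := by
  classical
  set n := Fintype.card V with hn
  -- edge finsets of the trees
  set F : Fin k → Finset (Sym2 V) := fun m => ((T m).edgeSet).toFinset with hF
  have hFmem : ∀ m e, e ∈ F m ↔ e ∈ (T m).edgeSet := by
    intro m e; simp [hF]
  -- each tree has n - 1 edges
  have hcard : ∀ m, (F m).card = n - 1 := by
    intro m
    obtain ⟨hle, hconn, hacyc⟩ := hT m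
    have htree : (T m).IsTree := ⟨hconn, hacyc⟩
    have := htree.card_edgeFinset
    have hEq : (T m).edgeFinset = F m := by
      ext e; simp [hF, SimpleGraph.mem_edgeFinset]
    rw [hEq] at this
    omega
  -- the union of the tree edges
  set U : Finset (Sym2 V) := Finset.univ.biUnion F with hU
  have hFU : ∀ m, F m ⊆ U := fun m => Finset.subset_biUnion_of_mem F (Finset.mem_univ m)
  -- multiplicity of each edge
  set mult : Sym2 V → ℕ := fun e => (Finset.univ.filter (fun m => e ∈ F m)).card with hmult
  -- total count
  have hsum : ∑ m : Fin k, (F m).card = ∑ e ∈ U, mult e := by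
    have : ∀ m : Fin k, (F m).card = ∑ e ∈ U, (if e ∈ F m then 1 else 0) := by
      intro m
      rw [← Finset.card_filter, Finset.filter_mem_eq_inter,
        Finset.inter_eq_right.2 (hFU m)]
    rw [Finset.sum_congr rfl (fun m _ => this m), Finset.sum_comm]
    apply Finset.sum_congr rfl
    intro e _
    rw [hmult, ← Finset.card_filter]
  -- multiplicity is at most 2
  have hmult2 : ∀ e ∈ U, mult e ≤ 2 := by
    intro e heU
    by_contra hgt
    push_neg at hgt
    obtain ⟨m1, hm1, m2, hm2, m3, hm3, h12, h13, h23⟩ := Finset.two_lt_card.1 hgt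
    simp only [Finset.mem_filter] at hm1 hm2 hm3
    induction e with
    | h u v =>
      have hadj : ∀ m : Fin k, s(u, v) ∈ F m → (T m).Adj u v := by
        intro m hm
        exact (SimpleGraph.mem_edgeSet _).1 ((hFmem m _).1 hm)
      have key : ∀ m : Fin k, s(u, v) ∈ F m →
          u ∈ innerSet (T m) ∨ v ∈ innerSet (T m) := by
        intro m hm
        exact inner_of_adj (hT m).2.1 hV (hadj m hm)
      have hne : ∀ (x : V) (a b : Fin k), a ≠ b → x ∈ innerSet (T a) → x ∈ innerSet (T b) → False := by
        intro x a b hab ha hb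
        have : x ∈ innerMulti T := ⟨a, b, hab, ha, hb⟩
        rw [hI] at this
        exact this
      rcases key m1 hm1.2 with h1 | h1 <;> rcases key m2 hm2.2 with h2 | h2 <;>
        rcases key m3 hm3.2 with h3 | h3
      · exact hne u m1 m2 h12 h1 h2
      · exact hne u m1 m2 h12 h1 h2
      · exact hne u m1 m3 h13 h1 h3
      · exact hne v m2 m3 h23 h2 h3
      · exact hne u m2 m3 h23 h2 h3
      · exact hne v m1 m3 h13 h1 h3
      · exact hne v m1 m2 h12 h1 h2
      · exact hne v m1 m2 h12 h1 h2
  -- edges of multiplicity 2 are in edgeMulti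
  set EM : Finset (Sym2 V) := U.filter (fun e => 2 ≤ mult e) with hEM
  have hEMsub : (EM : Set (Sym2 V)) ⊆ edgeMulti T := by
    intro e he
    simp only [hEM, Finset.coe_filter, Set.mem_setOf_eq] at he
    obtain ⟨heU, hm⟩ := he
    obtain ⟨a, ha, b, hb, hab⟩ := Finset.one_lt_card.1 hm
    simp only [Finset.mem_filter] at ha hb
    exact ⟨a, b, hab, (hFmem a e).1 ha.2, (hFmem b e).1 hb.2⟩
  have hEMcard : EM.card ≤ j := by
    calc EM.card = (EM : Set (Sym2 V)).ncard := (Set.ncard_coe_finset _).symm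
    _ ≤ (edgeMulti T).ncard := Set.ncard_le_ncard hEMsub (Set.toFinite _)
    _ ≤ j := hE
  -- bound the total count
  have hbound : ∑ e ∈ U, mult e ≤ U.card + EM.card := by
    calc ∑ e ∈ U, mult e ≤ ∑ e ∈ U, (1 + if 2 ≤ mult e then 1 else 0) := by
          apply Finset.sum_le_sum
          intro e he
          have := hmult2 e he
          by_cases h2 : 2 ≤ mult e <;> simp [h2] <;> omega
    _ = U.card + EM.card := by
          rw [Finset.sum_add_distrib]
          congr 1
          · simp
          · rw [← Finset.card_filter]
  -- U is contained in the edges of G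
  have hUG : U ⊆ G.edgeSet.toFinset := by
    intro e he
    obtain ⟨m, _, hm⟩ := Finset.mem_biUnion.1 he
    have : e ∈ (T m).edgeSet := (hFmem m e).1 hm
    have := SimpleGraph.edgeSet_mono (hT m).1 this
    simpa using this
  have hUcard : U.card ≤ G.edgeSet.ncard := by
    have := Finset.card_le_card hUG
    rwa [← Set.ncard_eq_toFinset_card'] at this
  -- put everything together
  have hLHS : k * (n - 1) = ∑ m : Fin k, (F m).card := by
    rw [Finset.sum_congr rfl (fun m _ => hcard m)]
    simp [mul_comm]
  calc k * (n - 1) = ∑ m : Fin k, (F m).card := hLHS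
  _ = ∑ e ∈ U, mult e := hsum
  _ ≤ U.card + EM.card := hbound
  _ ≤ G.edgeSet.ncard + j := Nat.add_le_add hUcard hEMcard
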